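/- Let R > 0, let A : ℝ³ → ℝ³ and Φ : ℝ³ → ℝ be C^∞ on ℝ³, and let η : ℝ³ → ℝ be C^∞ with η(x) = 0 whenever |x| ≤ R. Assume ∇Φ(x) = A(x) for every x with |x| ≥ R. Fix ξ ∈ ℝ³ and set Ψ(x) = exp(i(⟨x,ξ⟩ + Φ(x)))·η(x). Then for every x ∈ ℝ³, ((D − A)²Ψ)(x) − |ξ|²Ψ(x) = exp(i(⟨x,ξ⟩ + Φ(x)))·( −2i⟨ξ, ∇η(x)⟩ − Δη(x) ); in particular the effective perturbation symbol is compactly supported in x, being supported in the support of (∇η, Δη). -/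

import Mathlib

open Real MeasureTheory Filter
open scoped RealInnerProductSpace Topology

noncomputable section

/-- `ℝ³` as a Euclidean space. -/
abbrev E3 := EuclideanSpace ℝ (Fin 3)

/-- `j`-th partial derivative of a complex-valued function on `ℝ³`. -/
def pdC (f : E3 → ℂ) (j : Fin 3) (x : E3) : ℂ := fderiv ℝ f x (EuclideanSpace.single j 1)

/-- `j`-th partial derivative of a real-valued function on `ℝ³`. -/
def pdR (f : E3 → ℝ) (j : Fin 3) (x : E3) : ℝ := fderiv ℝ f x (EuclideanSpace.single j 1)

/-- The Laplacian of a complex-valued function: the sum of its second partial derivatives. -/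
def lapC (f : E3 → ℂ) (x : E3) : ℂ := ∑ j : Fin 3, pdC (pdC f j) j x

/-- The divergence `div V = ∑ⱼ ∂Vⱼ/∂xⱼ` of a vector field on `ℝ³`. -/
def divg (V : E3 → E3) (x : E3) : ℝ := ∑ j : Fin 3, pdR (fun y => V y j) j x

/-- The magnetic Schrödinger operator `(D − A)²` with `D = −i∇`, applied to `f`:
`((D − A)²f)(x) = −Δf(x) + i (div A)(x) f(x) + 2i ⟨A(x), ∇f(x)⟩ + |A(x)|² f(x)`. -/
def hamA (A : E3 → E3) (f : E3 → ℂ) (x : E3) : ℂ :=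
  -lapC f x + Complex.I * (divg A x : ℂ) * f x
    + 2 * Complex.I * ∑ j : Fin 3, (A x j : ℂ) * pdC f j x
    + ((‖A x‖^2 : ℝ) : ℂ) * f x

/-- The Laplacian of a real-valued function: the sum of its second partial derivatives. -/
def lapR (f : E3 → ℝ) (x : E3) : ℝ := ∑ j : Fin 3, pdR (pdR f j) j x

/-! ### Auxiliary lemmas -/


lemma contDiff_pdR (f : E3 → ℝ) (hf : ContDiff ℝ (⊤:ℕ∞) f) (j : Fin 3) :
    ContDiff ℝ (⊤:ℕ∞) (fun x => pdR f j x) :=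
  (hf.fderiv_right (by simp)).clm_apply contDiff_const

lemma norm_sq_eq_sum3 (v : E3) : ‖v‖^2 = ∑ j, v j ^2 := by
  rw [EuclideanSpace.norm_sq_eq]; simp [Real.norm_eq_abs, sq_abs]

lemma inner_eq_sum3 (ξ v : E3) : ⟪ξ, v⟫ = ∑ j, ξ j * v j := by
  simp [PiLp.inner_apply, RCLike.inner_apply]
  exact Finset.sum_congr rfl fun _ _ => mul_comm _ _

lemma gradient_apply' (f : E3 → ℝ) (x : E3) (j : Fin 3) : (gradient f x) j = pdR f j x := by
  have h1 : (gradient f x) j = ⟪gradient f x, EuclideanSpace.single j (1:ℝ)⟫ := by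
    rw [EuclideanSpace.inner_single_right]; simp
  rw [h1, gradient, InnerProductSpace.toDual_symm_apply]; rfl

lemma pdR_mul (f g : E3 → ℝ) (j : Fin 3) (x : E3)
    (hf : DifferentiableAt ℝ f x) (hg : DifferentiableAt ℝ g x) :
    pdR (fun y => f y * g y) j x = pdR f j x * g x + f x * pdR g j x := by
  unfold pdR
  rw [fderiv_fun_mul hf hg]
  simp only [ContinuousLinearMap.add_apply, ContinuousLinearMap.smul_apply, smul_eq_mul]
  ring

lemma vanish_fderiv (R : ℝ) (hR : 0 < R) (f : E3 → ℝ) (hf : ContDiff ℝ (⊤:ℕ∞) f)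
    (h0 : ∀ x : E3, ‖x‖ ≤ R → f x = 0) :
    ∀ x : E3, ‖x‖ ≤ R → fderiv ℝ f x = 0 := by
  intro x hx
  have hcont : Continuous (fderiv ℝ f) := (hf.fderiv_right (m := (⊤:ℕ∞)) (by simp)).continuous
  have hball : ∀ y ∈ Metric.ball (0:E3) R, fderiv ℝ f y = 0 := by
    intro y hy
    have hev : f =ᶠ[𝓝 y] (fun _ => (0:ℝ)) := by
      filter_upwards [Metric.isOpen_ball.mem_nhds hy] with z hz
      exact h0 z (le_of_lt (by simpa [Metric.mem_ball, dist_eq_norm] using hz))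
    rw [hev.fderiv_eq, fderiv_fun_const]
    rfl
  have hxcl : x ∈ closure (Metric.ball (0:E3) R) := by
    rw [closure_ball (0:E3) hR.ne']
    simpa [Metric.mem_closedBall, dist_eq_norm] using hx
  have := (Set.EqOn.closure (fun y hy => hball y hy) hcont continuous_const) hxcl
  simpa using this

lemma pdC_exp_form (g a b : E3 → ℝ) (x : E3)
    (hg : DifferentiableAt ℝ g x) (ha : DifferentiableAt ℝ a x) (hb : DifferentiableAt ℝ b x)
    (j : Fin 3) :
    pdC (fun y => Complex.exp (Complex.I * (g y : ℂ)) * (Complex.I * (a y:ℂ) + (b y:ℂ))) j x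
      = Complex.exp (Complex.I * (g x:ℂ)) *
          (Complex.I * (pdR g j x : ℂ) * (Complex.I * (a x:ℂ) + (b x:ℂ))
            + (Complex.I * (pdR a j x:ℂ) + (pdR b j x:ℂ))) := by
  have hgC : HasFDerivAt (fun y => (g y : ℂ)) (Complex.ofRealCLM.comp (fderiv ℝ g x)) x :=
    Complex.ofRealCLM.hasFDerivAt.comp x hg.hasFDerivAt
  have haC : HasFDerivAt (fun y => (a y : ℂ)) (Complex.ofRealCLM.comp (fderiv ℝ a x)) x :=
    Complex.ofRealCLM.hasFDerivAt.comp x ha.hasFDerivAt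
  have hbC : HasFDerivAt (fun y => (b y : ℂ)) (Complex.ofRealCLM.comp (fderiv ℝ b x)) x :=
    Complex.ofRealCLM.hasFDerivAt.comp x hb.hasFDerivAt
  have hu : HasFDerivAt (fun y => Complex.exp (Complex.I * (g y : ℂ)))
      (Complex.exp (Complex.I * (g x : ℂ)) •
        (Complex.I • Complex.ofRealCLM.comp (fderiv ℝ g x))) x :=
    (hgC.const_mul Complex.I).cexp
  have hv : HasFDerivAt (fun y => Complex.I * (a y:ℂ) + (b y:ℂ))
      (Complex.I • Complex.ofRealCLM.comp (fderiv ℝ a x)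
        + Complex.ofRealCLM.comp (fderiv ℝ b x)) x :=
    (haC.const_mul Complex.I).add hbC
  have hF := (hu.fun_mul hv).fderiv
  unfold pdC pdR
  rw [hF]
  simp only [ContinuousLinearMap.add_apply, ContinuousLinearMap.smul_apply,
    ContinuousLinearMap.coe_comp', Function.comp_apply, Complex.ofRealCLM_apply, smul_eq_mul]
  ring

/-- Pointwise identity, for every `x`. -/
lemma key_identity (R : ℝ) (hR : 0 < R) (A : E3 → E3) (Φ η : E3 → ℝ)
    (hA : ContDiff ℝ (⊤ : ℕ∞) A) (hΦ : ContDiff ℝ (⊤ : ℕ∞) Φ)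
    (hη : ContDiff ℝ (⊤ : ℕ∞) η) (hη0 : ∀ x : E3, ‖x‖ ≤ R → η x = 0)
    (hgrad : ∀ x : E3, R ≤ ‖x‖ → gradient Φ x = A x) (ξ : E3) (x : E3) :
    hamA A (fun y : E3 =>
        Complex.exp (Complex.I * ((⟪y, ξ⟫ + Φ y : ℝ) : ℂ)) * (η y : ℂ)) x
      - ((‖ξ‖^2 : ℝ) : ℂ) *
          (Complex.exp (Complex.I * ((⟪x, ξ⟫ + Φ x : ℝ) : ℂ)) * (η x : ℂ))
    = Complex.exp (Complex.I * ((⟪x, ξ⟫ + Φ x : ℝ) : ℂ)) *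
        (-2 * Complex.I * ((⟪ξ, gradient η x⟫ : ℝ) : ℂ) - ((lapR η x : ℝ) : ℂ)) := by
  classical
  set θ : E3 → ℝ := fun y => ⟪y, ξ⟫ + Φ y with hθdef
  -- smoothness of θ
  have hinner : ContDiff ℝ (⊤:ℕ∞) (fun y : E3 => ⟪y, ξ⟫) := by
    have : (fun y : E3 => ⟪y, ξ⟫) = fun y : E3 => (innerSL ℝ ξ) y := by
      funext y; rw [innerSL_apply_apply, real_inner_comm]
    rw [this]
    exact (innerSL ℝ ξ).contDiff
  have hθ : ContDiff ℝ (⊤:ℕ∞) θ := hinner.add hΦ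
  have hθd : Differentiable ℝ θ := hθ.differentiable (by simp)
  have hηd : Differentiable ℝ η := hη.differentiable (by simp)
  have hΦd : Differentiable ℝ Φ := hΦ.differentiable (by simp)
  have hθj : ∀ (j : Fin 3) (y : E3), pdR θ j y = ξ j + pdR Φ j y := by
    intro j y
    have hlin : HasFDerivAt (fun z : E3 => ⟪z, ξ⟫) (innerSL ℝ ξ) y := by
      have : (fun z : E3 => ⟪z, ξ⟫) = fun z : E3 => (innerSL ℝ ξ) z := by
        funext z; rw [innerSL_apply_apply, real_inner_comm]
      rw [this]; exact (innerSL ℝ ξ).hasFDerivAt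
    have : HasFDerivAt θ (innerSL ℝ ξ + fderiv ℝ Φ y) y :=
      hlin.add (hΦd y).hasFDerivAt
    rw [pdR, this.fderiv]
    simp [EuclideanSpace.inner_single_right, pdR]
  -- first derivatives of F
  have hF1 : ∀ (j : Fin 3) (y : E3),
      pdC (fun z => Complex.exp (Complex.I * (θ z : ℂ)) * (η z : ℂ)) j y
        = Complex.exp (Complex.I * (θ y : ℂ)) *
            (Complex.I * ((pdR θ j y * η y : ℝ) : ℂ) + ((pdR η j y : ℝ) : ℂ)) := by
    intro j y
    have hshape : (fun z => Complex.exp (Complex.I * (θ z : ℂ)) * (η z : ℂ))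
        = fun z => Complex.exp (Complex.I * (θ z : ℂ))
            * (Complex.I * (((0:ℝ)) : ℂ) + ((η z : ℝ) : ℂ)) := by
      funext z; push_cast; ring
    rw [hshape, pdC_exp_form θ (fun _ => (0:ℝ)) η y (hθd y) (differentiableAt_const _) (hηd y) j]
    have h0 : pdR (fun _ => (0:ℝ)) j y = 0 := by
      simp [pdR]
    rw [h0]
    push_cast
    ring
  -- second derivatives of F
  have hF2 : ∀ (j : Fin 3),
      pdC (pdC (fun z => Complex.exp (Complex.I * (θ z : ℂ)) * (η z : ℂ)) j) j x
        = Complex.exp (Complex.I * (θ x : ℂ)) *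
            (Complex.I * (pdR θ j x : ℂ)
                * (Complex.I * ((pdR θ j x * η x : ℝ) : ℂ) + ((pdR η j x : ℝ) : ℂ))
              + (Complex.I * (((pdR (pdR θ j) j x * η x + pdR θ j x * pdR η j x : ℝ)) : ℂ)
                  + ((pdR (pdR η j) j x : ℝ) : ℂ))) := by
    intro j
    have ha : ContDiff ℝ (⊤:ℕ∞) (fun y => pdR θ j y * η y) :=
      (contDiff_pdR θ hθ j).mul hη
    have hb : ContDiff ℝ (⊤:ℕ∞) (fun y => pdR η j y) := contDiff_pdR η hη j
    have hEq : pdC (fun z => Complex.exp (Complex.I * (θ z : ℂ)) * (η z : ℂ)) j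
        = fun y => Complex.exp (Complex.I * (θ y : ℂ)) *
            (Complex.I * ((pdR θ j y * η y : ℝ) : ℂ) + ((pdR η j y : ℝ) : ℂ)) := by
      funext y; exact hF1 j y
    rw [hEq, pdC_exp_form θ (fun y => pdR θ j y * η y) (fun y => pdR η j y) x
      (hθd x) (ha.differentiable (by simp) x) (hb.differentiable (by simp) x) j,
      pdR_mul (pdR θ j) η j x ((contDiff_pdR θ hθ j).differentiable (by simp) x) (hηd x)]
  -- F as appearing in the statement
  have hFdef : (fun y : E3 =>
      Complex.exp (Complex.I * ((⟪y, ξ⟫ + Φ y : ℝ) : ℂ)) * (η y : ℂ))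
      = fun z => Complex.exp (Complex.I * (θ z : ℂ)) * (η z : ℂ) := rfl
  rw [hFdef]
  rw [show (Complex.I * ((⟪x, ξ⟫ + Φ x : ℝ) : ℂ)) = Complex.I * (θ x : ℂ) from rfl]
  simp only [hamA, lapC]
  rcases le_or_gt ‖x‖ R with hcase | hcase
  · -- inside / boundary: all η-terms vanish
    have hη0x : η x = 0 := hη0 x hcase
    have hd1 : ∀ z : E3, ‖z‖ ≤ R → fderiv ℝ η z = 0 := vanish_fderiv R hR η hη hη0
    have hp1 : ∀ (j : Fin 3) (z : E3), ‖z‖ ≤ R → pdR η j z = 0 := by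
      intro j z hz; rw [pdR, hd1 z hz]; rfl
    have hp2 : ∀ j : Fin 3, pdR (pdR η j) j x = 0 := by
      intro j
      have := vanish_fderiv R hR (fun z => pdR η j z) (contDiff_pdR η hη j)
        (fun z hz => hp1 j z hz) x hcase
      rw [pdR, this]; rfl
    have hgr : gradient η x = 0 := by
      rw [gradient, hd1 x hcase]; simp
    have hlap : lapR η x = 0 := by
      simp [lapR, hp2]
    rw [hgr, hlap]
    simp only [hF1, hF2, hη0x, hp1 _ x hcase, hp2, inner_zero_right, mul_zero, zero_mul,
      Fin.sum_univ_three]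
    push_cast
    ring
  · -- outside: ∇Φ = A near x
    have hΦj : ∀ (j : Fin 3) (y : E3), R ≤ ‖y‖ → pdR Φ j y = A y j := by
      intro j y hy
      rw [← gradient_apply', hgrad y hy]
    have hAx : ∀ j : Fin 3, pdR Φ j x = A x j := fun j => hΦj j x hcase.le
    have hsnd : ∀ j : Fin 3, pdR (pdR Φ j) j x = pdR (fun y => A y j) j x := by
      intro j
      have hopen : IsOpen {y : E3 | R < ‖y‖} := isOpen_lt continuous_const continuous_norm
      have hev : (fun y => pdR Φ j y) =ᶠ[𝓝 x] fun y => A y j := by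
        filter_upwards [hopen.mem_nhds hcase] with z hz
        exact hΦj j z (le_of_lt hz)
      rw [pdR, pdR, hev.fderiv_eq]
    have hθ2 : ∀ j : Fin 3, pdR (pdR θ j) j x = pdR (fun y => A y j) j x := by
      intro j
      have : pdR θ j = fun y => ξ j + pdR Φ j y := funext fun y => hθj j y
      rw [this, ← hsnd j, pdR, pdR, fderiv_const_add]
    simp only [hF1, hF2, hθj, hθ2, hAx]
    rw [norm_sq_eq_sum3 ξ, norm_sq_eq_sum3 (A x), inner_eq_sum3, lapR, divg]
    simp only [gradient_apply', Fin.sum_univ_three]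
    push_cast
    ring_nf
    simp only [Complex.I_sq]
    ring

/-- Let `A`, `Φ` be `C^∞` on `ℝ³`, `η` a `C^∞` cut-off vanishing on
`{|x| ≤ R}`, and assume `∇Φ = A` for `|x| ≥ R`. For `Ψ(x) = exp(i(⟨x,ξ⟩ + Φ(x))) η(x)` one
has, for every `x ∈ ℝ³`,
`((D−A)²Ψ)(x) − |ξ|²Ψ(x) = exp(i(⟨x,ξ⟩ + Φ(x))) (−2i⟨ξ, ∇η(x)⟩ − Δη(x))`;
in particular the effective perturbation is supported in the support of `(∇η, Δη)`. -/
theorem effective_perturbation (R : ℝ) (hR : 0 < R) (A : E3 → E3) (Φ η : E3 → ℝ)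
    (hA : ContDiff ℝ (⊤ : ℕ∞) A) (hΦ : ContDiff ℝ (⊤ : ℕ∞) Φ)
    (hη : ContDiff ℝ (⊤ : ℕ∞) η) (hη0 : ∀ x : E3, ‖x‖ ≤ R → η x = 0)
    (hgrad : ∀ x : E3, R ≤ ‖x‖ → gradient Φ x = A x) (ξ : E3) :
    (∀ x : E3,
        hamA A (fun y : E3 =>
            Complex.exp (Complex.I * ((⟪y, ξ⟫ + Φ y : ℝ) : ℂ)) * (η y : ℂ)) x
          - ((‖ξ‖^2 : ℝ) : ℂ) *
              (Complex.exp (Complex.I * ((⟪x, ξ⟫ + Φ x : ℝ) : ℂ)) * (η x : ℂ))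
        = Complex.exp (Complex.I * ((⟪x, ξ⟫ + Φ x : ℝ) : ℂ)) *
            (-2 * Complex.I * ((⟪ξ, gradient η x⟫ : ℝ) : ℂ) - ((lapR η x : ℝ) : ℂ))) ∧
    Function.support (fun x : E3 =>
        hamA A (fun y : E3 =>
            Complex.exp (Complex.I * ((⟪y, ξ⟫ + Φ y : ℝ) : ℂ)) * (η y : ℂ)) x
          - ((‖ξ‖^2 : ℝ) : ℂ) *
              (Complex.exp (Complex.I * ((⟪x, ξ⟫ + Φ x : ℝ) : ℂ)) * (η x : ℂ)))
      ⊆ Function.support (fun x : E3 => gradient η x)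
          ∪ Function.support (fun x : E3 => lapR η x) := by
  have hmain := key_identity R hR A Φ η hA hΦ hη hη0 hgrad ξ
  refine ⟨hmain, ?_⟩
  intro x hx
  simp only [Function.mem_support] at hx
  rw [Set.mem_union]
  by_contra hc
  push_neg at hc
  obtain ⟨h1, h2⟩ := hc
  simp only [Function.mem_support, not_not] at h1 h2
  apply hx
  rw [hmain x, h1, h2]
  simp
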